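/- The number of colored pairs Φ is not an ordinal potential function for the uniform swap Schelling game on non-regular networks: there exist a finite connected non-regular graph G, window size w = 1, tolerance parameter τ = 6/7, disjoint agent sets A and B, a bijective placement p, and an improving swap of two agents producing the placement p' such that Φ(p') > Φ(p). -/

import Mathlib

open SimpleGraph Finset

namespace Schelling

variable {V I : Type*}

/-- The `w`-neighborhood of a node `u`: all nodes `v ≠ u` with `d_G(u,v) ≤ w`. -/
def nbhd (G : SimpleGraph V) (w : ℕ) (u : V) : Set V :=
  {v | v ≠ u ∧ G.dist u v ≤ w}

/-- `|N⁺(p(x))|`: number of nodes in the `w`-neighborhood of `p x` occupied by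
agents of the same type as `x`. -/
noncomputable def sCount (G : SimpleGraph V) (w : ℕ) (tp : I → Bool) (p : I → V) (x : I) : ℕ :=
  {v | v ∈ nbhd G w (p x) ∧ ∃ y, p y = v ∧ tp y = tp x}.ncard

/-- `|N⁻(p(x))|`: number of nodes in the `w`-neighborhood of `p x` occupied by
agents of the other type. -/
noncomputable def dCount (G : SimpleGraph V) (w : ℕ) (tp : I → Bool) (p : I → V) (x : I) : ℕ :=
  {v | v ∈ nbhd G w (p x) ∧ ∃ y, p y = v ∧ tp y ≠ tp x}.ncard

/-- An agent is isolated if no node of its neighborhood is occupied. -/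
def isolated (G : SimpleGraph V) (w : ℕ) (tp : I → Bool) (p : I → V) (x : I) : Prop :=
  sCount G w tp p x + dCount G w tp p x = 0

/-- The (scalar) cost of agent `x`: `τ` if isolated, otherwise
`max 0 (τ - |N⁺|/(|N⁺| + |N⁻|))`. -/
noncomputable def ucost (G : SimpleGraph V) (w : ℕ) (τ : ℝ) (tp : I → Bool) (p : I → V)
    (x : I) : ℝ :=
  if sCount G w tp p x + dCount G w tp p x = 0 then τ
  else max 0 (τ - (sCount G w tp p x : ℝ) / ((sCount G w tp p x : ℝ) + (dCount G w tp p x : ℝ)))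

/-- An agent is happy if it is not isolated and its local happiness ratio is at least `τ`. -/
def happy (G : SimpleGraph V) (w : ℕ) (τ : ℝ) (tp : I → Bool) (p : I → V) (x : I) : Prop :=
  sCount G w tp p x + dCount G w tp p x ≠ 0 ∧
    τ ≤ (sCount G w tp p x : ℝ) / ((sCount G w tp p x : ℝ) + (dCount G w tp p x : ℝ))

/-- The vector cost of agent `x`: scalar cost together with `d_G(fav_x, p x) + 1`,
to be compared lexicographically. -/
noncomputable def vcost (G : SimpleGraph V) (w : ℕ) (τ : ℝ) (tp : I → Bool) (fav : I → V)
    (p : I → V) (x : I) : ℝ × ℕ :=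
  (ucost G w τ tp p x, G.dist (fav x) (p x) + 1)

/-- The number of colored pairs `Φ(p) = (1/2) · Σ_x |N⁻(p(x))|`. -/
noncomputable def Phi [Fintype I] (G : SimpleGraph V) (w : ℕ) (tp : I → Bool) (p : I → V) : ℝ :=
  (1 / 2) * ∑ x : I, (dCount G w tp p x : ℝ)

/-- The pair potential `(Φ(p), Σ_x d_G(fav_x, p x))`, compared lexicographically. -/
noncomputable def PhiPair [Fintype I] (G : SimpleGraph V) (w : ℕ) (tp : I → Bool) (fav : I → V)
    (p : I → V) : ℝ × ℕ :=
  (Phi G w tp p, ∑ x : I, G.dist (fav x) (p x))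

/-- The placement obtained from `p` by swapping the locations of agents `x` and `y`. -/
def swapP [DecidableEq I] (p : I → V) (x y : I) : I → V := p ∘ Equiv.swap x y

/-- The agents of type `A`. -/
def typeA [Fintype I] (tp : I → Bool) : Finset I := Finset.univ.filter (fun i => tp i = true)

/-- The agents of type `B`. -/
def typeB [Fintype I] (tp : I → Bool) : Finset I := Finset.univ.filter (fun i => tp i = false)

/-- A placement is stable for the uniform SSG if no pair of agents can both strictly
decrease their cost by swapping. -/
def uStable (G : SimpleGraph V) (w : ℕ) (τ : ℝ) (tp : I → Bool) (p : I → V)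
    [DecidableEq I] : Prop :=
  ∀ x y : I, ¬ (ucost G w τ tp (swapP p x y) x < ucost G w τ tp p x ∧
                ucost G w τ tp (swapP p x y) y < ucost G w τ tp p y)

/-- A placement is stable for the SSG with favorite nodes if no pair of agents can both
strictly lexicographically decrease their cost vector by swapping. -/
def vStable (G : SimpleGraph V) (w : ℕ) (τ : ℝ) (tp : I → Bool) (fav : I → V) (p : I → V)
    [DecidableEq I] : Prop :=
  ∀ x y : I, ¬ (toLex (vcost G w τ tp fav (swapP p x y) x) < toLex (vcost G w τ tp fav p x) ∧
                toLex (vcost G w τ tp fav (swapP p x y) y) < toLex (vcost G w τ tp fav p y))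



open Classical in
/-- The weight of the (ordered) pair of nodes `(u,v)` in the jump-game potential:
`1` if both are occupied by agents of different types, `1/3` if at least one is empty,
and `0` otherwise. -/
noncomputable def edgeW (tp : I → Bool) (p : I → V) (u v : V) : ℝ :=
  if ∃ x y : I, p x = u ∧ p y = v ∧ tp x ≠ tp y then 1
  else if (∀ x : I, p x ≠ u) ∨ (∀ y : I, p y ≠ v) then 1 / 3
  else 0

open Classical in
/-- The edge-weight potential `Φ(p) = Σ_{e ∈ E} w_e(p)`, written as half the sum over
ordered adjacent pairs (each edge is counted twice, and `edgeW` is symmetric). -/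
noncomputable def jumpPhi [Fintype V] (G : SimpleGraph V) (tp : I → Bool) (p : I → V) : ℝ :=
  (1 / 2) * ∑ u : V, ∑ v : V, if G.Adj u v then edgeW tp p u v else 0

/-- A placement is stable for the uniform JSG if no agent can strictly decrease her cost
by jumping to an empty node. -/
def jStable (G : SimpleGraph V) (w : ℕ) (τ : ℝ) (tp : I → Bool) (p : I → V)
    [DecidableEq I] : Prop :=
  ∀ (x : I) (v : V), v ∉ Set.range p →
    ¬ (ucost G w τ tp (Function.update p x v) x < ucost G w τ tp p x)

/-- The social cost of a placement: the number of unhappy agents together with the total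
distance cost, compared lexicographically. -/
noncomputable def socialCost [Fintype I] (G : SimpleGraph V) (w : ℕ) (τ : ℝ) (tp : I → Bool)
    (fav : I → V) (p : I → V) : ℕ × ℕ :=
  ({x : I | ¬ happy G w τ tp p x}.ncard, ∑ x : I, (G.dist (fav x) (p x) + 1))


/-! ### Auxiliary material for the counterexample -/

lemma nbhd_one' (G : SimpleGraph V) (hc : G.Connected) (u : V) :
    nbhd G 1 u = {v | G.Adj u v} := by
  ext v
  simp only [nbhd, Set.mem_setOf_eq]
  constructor
  · rintro ⟨hne, hle⟩
    have h1 : G.dist u v = 1 := le_antisymm hle (hc.pos_dist_of_ne (Ne.symm hne))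
    exact (SimpleGraph.dist_eq_one_iff_adj (G := G)).mp h1
  · intro h
    exact ⟨h.ne', le_of_eq ((SimpleGraph.dist_eq_one_iff_adj (G := G)).mpr h)⟩

lemma sCount_eq' [Fintype V] [DecidableEq V] (G : SimpleGraph V) [DecidableRel G.Adj]
    (hc : G.Connected) (tp : I → Bool) (e : I ≃ V) (x : I) :
    sCount G 1 tp ⇑e x =
      (Finset.univ.filter fun v => G.Adj (e x) v ∧ tp (e.symm v) = tp x).card := by
  unfold sCount
  have h : {v | v ∈ nbhd G 1 (e x) ∧ ∃ y, e y = v ∧ tp y = tp x}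
      = ↑(Finset.univ.filter fun v => G.Adj (e x) v ∧ tp (e.symm v) = tp x) := by
    ext v
    rw [nbhd_one' G hc]
    simp only [Set.mem_setOf_eq, Finset.coe_filter, Finset.mem_univ, true_and]
    constructor
    · rintro ⟨ha, y, rfl, hy⟩
      exact ⟨ha, by simpa using hy⟩
    · rintro ⟨ha, ht⟩
      exact ⟨ha, e.symm v, e.apply_symm_apply v, ht⟩
  rw [h, Set.ncard_coe_finset]

lemma dCount_eq' [Fintype V] [DecidableEq V] (G : SimpleGraph V) [DecidableRel G.Adj]
    (hc : G.Connected) (tp : I → Bool) (e : I ≃ V) (x : I) :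
    dCount G 1 tp ⇑e x =
      (Finset.univ.filter fun v => G.Adj (e x) v ∧ tp (e.symm v) ≠ tp x).card := by
  unfold dCount
  have h : {v | v ∈ nbhd G 1 (e x) ∧ ∃ y, e y = v ∧ tp y ≠ tp x}
      = ↑(Finset.univ.filter fun v => G.Adj (e x) v ∧ tp (e.symm v) ≠ tp x) := by
    ext v
    rw [nbhd_one' G hc]
    simp only [Set.mem_setOf_eq, Finset.coe_filter, Finset.mem_univ, true_and]
    constructor
    · rintro ⟨ha, y, rfl, hy⟩
      exact ⟨ha, by simpa using hy⟩
    · rintro ⟨ha, ht⟩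
      exact ⟨ha, e.symm v, e.apply_symm_apply v, ht⟩
  rw [h, Set.ncard_coe_finset]

/-- The counterexample graph on 6 nodes: edges 01, 03, 04, 05, 12. -/
def myG : SimpleGraph (Fin 6) where
  Adj a b := (a, b) ∈ [((0 : Fin 6), (1 : Fin 6)), (0, 3), (0, 4), (0, 5), (1, 2)] ∨
             (b, a) ∈ [((0 : Fin 6), (1 : Fin 6)), (0, 3), (0, 4), (0, 5), (1, 2)]
  symm := by constructor; intro a b h; revert h; revert b; revert a; decide
  loopless := by constructor; intro a h; revert h; revert a; decide

instance : DecidableRel myG.Adj := fun a b =>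
  inferInstanceAs (Decidable (_ ∨ _))

/-- The type assignment: agents `2` and `3` have type `true`, the rest type `false`. -/
def myTp : Fin 6 → Bool := fun i => i == 2 || i == 3

lemma myG_conn : myG.Connected := by
  rw [SimpleGraph.connected_iff]
  exact ⟨by decide, inferInstance⟩


end Schelling

open Schelling

/-- The number of colored pairs `Φ` is not an ordinal potential function for
the uniform swap Schelling game on non-regular networks: there exist a finite connected
non-regular graph `G`, window size `w = 1`, tolerance `τ = 6/7`, disjoint agent sets, a
bijective placement `p` and an improving swap producing `p'` with `Φ(p') > Φ(p)`. -/
theorem uSSG_Phi_not_potential_nonregular :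
    ∃ (V : Type) (_ : Fintype V) (I : Type) (_ : Fintype I) (_ : DecidableEq I)
      (G : SimpleGraph V) (tp : I → Bool) (p : I → V) (x y : I),
      G.Connected ∧
      (∃ u v : V, (G.neighborSet u).ncard ≠ (G.neighborSet v).ncard) ∧
      2 ≤ (typeA tp).card ∧ 2 ≤ (typeB tp).card ∧
      Function.Bijective p ∧
      ucost G 1 (6 / 7) tp (swapP p x y) x < ucost G 1 (6 / 7) tp p x ∧
      ucost G 1 (6 / 7) tp (swapP p x y) y < ucost G 1 (6 / 7) tp p y ∧
      Phi G 1 tp p < Phi G 1 tp (swapP p x y) := by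
  classical
  refine ⟨Fin 6, inferInstance, Fin 6, inferInstance, inferInstance, myG, myTp, id, 0, 2,
    myG_conn, ⟨0, 2, ?_⟩, ?_, ?_, Function.bijective_id, ?_, ?_, ?_⟩
  · rw [Set.ncard_eq_toFinset_card', Set.ncard_eq_toFinset_card']
    decide
  · decide
  · decide
  all_goals {
    have hid : (id : Fin 6 → Fin 6) = ⇑(Equiv.refl (Fin 6)) := rfl
    have hsw : swapP (id : Fin 6 → Fin 6) 0 2 = ⇑(Equiv.swap (0 : Fin 6) 2) := by
      funext i
      simp [swapP]
    have hs0 : sCount myG 1 myTp id 0 = 3 := by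
      rw [hid, sCount_eq' myG myG_conn]; decide
    have hd0 : dCount myG 1 myTp id 0 = 1 := by
      rw [hid, dCount_eq' myG myG_conn]; decide
    have hs2 : sCount myG 1 myTp id 2 = 0 := by
      rw [hid, sCount_eq' myG myG_conn]; decide
    have hd2 : dCount myG 1 myTp id 2 = 1 := by
      rw [hid, dCount_eq' myG myG_conn]; decide
    have hs0' : sCount myG 1 myTp (swapP id 0 2) 0 = 1 := by
      rw [hsw, sCount_eq' myG myG_conn]; decide
    have hd0' : dCount myG 1 myTp (swapP id 0 2) 0 = 0 := by
      rw [hsw, dCount_eq' myG myG_conn]; decide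
    have hs2' : sCount myG 1 myTp (swapP id 0 2) 2 = 1 := by
      rw [hsw, sCount_eq' myG myG_conn]; decide
    have hd2' : dCount myG 1 myTp (swapP id 0 2) 2 = 3 := by
      rw [hsw, dCount_eq' myG myG_conn]; decide
    have hsum : (∑ x : Fin 6, dCount myG 1 myTp id x) = 4 := by
      simp only [hid, dCount_eq' myG myG_conn]
      decide
    have hsum' : (∑ x : Fin 6, dCount myG 1 myTp (swapP id 0 2) x) = 6 := by
      simp only [hsw, dCount_eq' myG myG_conn]
      decide
    first
    | (unfold ucost
       rw [hs0, hd0, hs0', hd0']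
       norm_num)
    | (unfold ucost
       rw [hs2, hd2, hs2', hd2']
       norm_num)
    | (unfold Phi
       rw [← Nat.cast_sum, ← Nat.cast_sum, hsum, hsum']
       norm_num) }
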